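/- For every probability measure μ on ℝ with compact support and every x ∈ ℝ: D(N(x,σ1²) ‖ μ∗N(0,σ1²)) − D(N(x,σ2²) ‖ μ∗N(0,σ2²)) = ∫_ℝ g(y) φ_{σ1}(y−x) dy + log(σ2/σ1), where D is the Kullback–Leibler divergence. -/

import Mathlib

open MeasureTheory Real Filter

noncomputable section

/-- The `N(0,σ²)` density `φ_σ`. -/
def phiR (σ u : ℝ) : ℝ := (Real.sqrt (2 * π * σ ^ 2))⁻¹ * Real.exp (-u ^ 2 / (2 * σ ^ 2))

/-- The Gaussian measure `N(x,σ²)` on `ℝ`. -/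
def gauss1 (σ x : ℝ) : Measure ℝ :=
  volume.withDensity fun y => ENNReal.ofReal (phiR σ (y - x))

/-- Convolution `μ ∗ N(0,σ²)`. -/
def convGauss1 (μ : Measure ℝ) (σ : ℝ) : Measure ℝ :=
  Measure.map (fun p : ℝ × ℝ => p.1 + p.2) (μ.prod (gauss1 σ 0))

/-- Kullback–Leibler divergence (real-valued). -/
def KL {α : Type*} [MeasurableSpace α] (μ ν : Measure α) : ℝ :=
  ∫ y, Real.log (μ.rnDeriv ν y).toReal ∂μ

/-- Density `f_i` of `μ ∗ N(0,σ²)`. -/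
def outDens (σ : ℝ) (μ : Measure ℝ) (y : ℝ) : ℝ := ∫ x, phiR σ (y - x) ∂μ

/-- The function `g(y) = E[log f₂(y+N)] − log f₁(y)` with `N ∼ N(0, σ2²−σ1²)`. -/
def gFun (σ1 σ2 : ℝ) (μ : Measure ℝ) (y : ℝ) : ℝ :=
  (∫ t : ℝ, Real.log (outDens σ2 μ (y + t)) * phiR (Real.sqrt (σ2 ^ 2 - σ1 ^ 2)) t)
    - Real.log (outDens σ1 μ y)

/-- Secrecy-information of the input distribution `μ`. -/
def secInfo1 (σ1 σ2 : ℝ) (μ : Measure ℝ) : ℝ :=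
  ∫ x, (KL (gauss1 σ1 x) (convGauss1 μ σ1) - KL (gauss1 σ2 x) (convGauss1 μ σ2)) ∂μ

/-- Scalar secrecy-capacity under the amplitude constraint `|X| ≤ R`. -/
def Cs1 (σ1 σ2 R : ℝ) : ℝ :=
  sSup {r : ℝ | ∃ μ : Measure ℝ, IsProbabilityMeasure μ ∧
    (∀ᵐ x ∂μ, |x| ≤ R) ∧ secInfo1 σ1 σ2 μ = r}

/-- Topological support of a measure: points all of whose open neighbourhoods
have positive measure. -/
def msupport {α : Type*} [TopologicalSpace α] [MeasurableSpace α] (μ : Measure α) : Set α :=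
  {x | ∀ U : Set α, IsOpen U → x ∈ U → 0 < μ U}

end

open scoped ENNReal NNReal
open ProbabilityTheory

section AuxiliaryProofs

section Basics
open ProbabilityTheory

lemma sqrt2pi_pos {σ : ℝ} (hσ : 0 < σ) : 0 < Real.sqrt (2 * π * σ ^ 2) :=
  Real.sqrt_pos.2 (by positivity)

lemma phiR_pos {σ : ℝ} (hσ : 0 < σ) (u : ℝ) : 0 < phiR σ u :=
  mul_pos (inv_pos.2 (sqrt2pi_pos hσ)) (Real.exp_pos _)

lemma phiR_le {σ : ℝ} (hσ : 0 < σ) (u : ℝ) : phiR σ u ≤ (Real.sqrt (2 * π * σ ^ 2))⁻¹ := by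
  have h1 : Real.exp (-u ^ 2 / (2 * σ ^ 2)) ≤ 1 := by
    rw [Real.exp_le_one_iff]
    apply div_nonpos_of_nonpos_of_nonneg (neg_nonpos.2 (by positivity)) (by positivity)
  have h2 : (0:ℝ) ≤ (Real.sqrt (2 * π * σ ^ 2))⁻¹ := by positivity
  calc phiR σ u ≤ (Real.sqrt (2 * π * σ ^ 2))⁻¹ * 1 := mul_le_mul_of_nonneg_left h1 h2
    _ = _ := mul_one _

lemma continuous_phiR (σ : ℝ) : Continuous (phiR σ) := by
  unfold phiR; fun_prop

lemma phiR_eq_gaussianPDFReal {σ : ℝ} (hσ : 0 < σ) (m y : ℝ) :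
    phiR σ (y - m) = gaussianPDFReal m (⟨σ ^ 2, sq_nonneg σ⟩ : NNReal) y := by
  simp only [phiR, gaussianPDFReal]
  norm_num
  rfl

lemma nnsq_ne_zero {σ : ℝ} (hσ : 0 < σ) : (⟨σ ^ 2, sq_nonneg σ⟩ : NNReal) ≠ 0 := by
  intro h
  have := congrArg (NNReal.toReal) h
  change σ ^ 2 = (0:ℝ) at this; simp at this
  exact hσ.ne' this

lemma integral_phiR_sub {σ : ℝ} (hσ : 0 < σ) (m : ℝ) : ∫ y : ℝ, phiR σ (y - m) = 1 := by
  simp_rw [phiR_eq_gaussianPDFReal hσ m]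
  exact integral_gaussianPDFReal_eq_one m (nnsq_ne_zero hσ)

lemma lintegral_phiR_sub {σ : ℝ} (hσ : 0 < σ) (m : ℝ) :
    ∫⁻ y : ℝ, ENNReal.ofReal (phiR σ (y - m)) = 1 := by
  simp_rw [phiR_eq_gaussianPDFReal hσ m]
  exact lintegral_gaussianPDFReal_eq_one m (nnsq_ne_zero hσ)

lemma integrable_phiR_sub {σ : ℝ} (hσ : 0 < σ) (m : ℝ) :
    Integrable (fun y : ℝ => phiR σ (y - m)) := by
  simp_rw [phiR_eq_gaussianPDFReal hσ m]
  exact integrable_gaussianPDFReal m _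

lemma log_phiR {σ : ℝ} (hσ : 0 < σ) (u : ℝ) :
    Real.log (phiR σ u) = -Real.log (Real.sqrt (2 * π * σ ^ 2)) + -u ^ 2 / (2 * σ ^ 2) := by
  rw [phiR, Real.log_mul (by positivity) (Real.exp_ne_zero _), Real.log_inv, Real.log_exp]

lemma abs_log_phiR_le {σ : ℝ} (hσ : 0 < σ) (u : ℝ) :
    |Real.log (phiR σ u)| ≤ |Real.log (Real.sqrt (2 * π * σ ^ 2))| + u ^ 2 / (2 * σ ^ 2) := by
  rw [log_phiR hσ]
  calc |(-Real.log (Real.sqrt (2 * π * σ ^ 2)) + -u ^ 2 / (2 * σ ^ 2))|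
      ≤ |(-Real.log (Real.sqrt (2 * π * σ ^ 2)))| + |(-u ^ 2 / (2 * σ ^ 2))| := abs_add_le _ _
    _ ≤ _ := by
        rw [abs_neg]
        gcongr
        rw [abs_of_nonpos (div_nonpos_of_nonpos_of_nonneg (neg_nonpos.2 (by positivity)) (by positivity)),
          neg_div, neg_neg]

lemma phiR_anti {σ : ℝ} (hσ : 0 < σ) {u v : ℝ} (h : u ^ 2 ≤ v ^ 2) : phiR σ v ≤ phiR σ u := by
  unfold phiR
  refine mul_le_mul_of_nonneg_left (Real.exp_le_exp.2 ?_) (by positivity)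
  have h2 : -v ^ 2 ≤ -u ^ 2 := neg_le_neg h
  gcongr

end Basics

section Integrability

lemma phiR_eq_exp (σ u : ℝ) :
    phiR σ u = (Real.sqrt (2 * π * σ ^ 2))⁻¹ * Real.exp (-(2 * σ ^ 2)⁻¹ * u ^ 2) := by
  unfold phiR
  congr 1
  rw [neg_div, div_eq_inv_mul, neg_mul]

lemma integrable_id_mul_phiR {σ : ℝ} (hσ : 0 < σ) :
    Integrable (fun u : ℝ => u * phiR σ u) := by
  have hb : (0:ℝ) < (2 * σ ^ 2)⁻¹ := by positivity
  simp_rw [phiR_eq_exp]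
  have : (fun u : ℝ => u * ((Real.sqrt (2 * π * σ ^ 2))⁻¹ *
      Real.exp (-(2 * σ ^ 2)⁻¹ * u ^ 2)))
      = fun u : ℝ => (Real.sqrt (2 * π * σ ^ 2))⁻¹ *
        (u * Real.exp (-(2 * σ ^ 2)⁻¹ * u ^ 2)) := by funext u; ring
  rw [this]
  exact (integrable_mul_exp_neg_mul_sq hb).const_mul _

lemma integrable_sq_mul_phiR {σ : ℝ} (hσ : 0 < σ) :
    Integrable (fun u : ℝ => u ^ 2 * phiR σ u) := by
  have hb : (0:ℝ) < (2 * σ ^ 2)⁻¹ := by positivity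
  have h2 : Integrable (fun u : ℝ => u ^ (2:ℝ) * Real.exp (-(2 * σ ^ 2)⁻¹ * u ^ 2)) :=
    integrable_rpow_mul_exp_neg_mul_sq hb (by norm_num)
  have h3 : Integrable (fun u : ℝ => u ^ (2:ℕ) * Real.exp (-(2 * σ ^ 2)⁻¹ * u ^ 2)) := by
    have : ((2:ℕ):ℝ) = (2:ℝ) := by norm_num
    simpa [Real.rpow_natCast] using h2
  simp_rw [phiR_eq_exp]
  have : (fun u : ℝ => u ^ 2 * ((Real.sqrt (2 * π * σ ^ 2))⁻¹ *
      Real.exp (-(2 * σ ^ 2)⁻¹ * u ^ 2)))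
      = fun u : ℝ => (Real.sqrt (2 * π * σ ^ 2))⁻¹ *
        (u ^ 2 * Real.exp (-(2 * σ ^ 2)⁻¹ * u ^ 2)) := by funext u; ring
  rw [this]
  exact h3.const_mul _

lemma integrable_poly_mul_phiR {σ : ℝ} (hσ : 0 < σ) (x A B : ℝ) :
    Integrable (fun y : ℝ => (A + B * y ^ 2) * phiR σ (y - x)) := by
  have I0 : Integrable (fun u : ℝ => phiR σ u) := by simpa using integrable_phiR_sub hσ 0
  have key : Integrable (fun u : ℝ => (A + B * (u + x) ^ 2) * phiR σ u) := by
    have : (fun u : ℝ => (A + B * (u + x) ^ 2) * phiR σ u)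
        = fun u => ((A + B * x ^ 2) * phiR σ u + (2 * B * x) * (u * phiR σ u))
            + B * (u ^ 2 * phiR σ u) := by funext u; ring
    rw [this]
    exact ((I0.const_mul _).add ((integrable_id_mul_phiR hσ).const_mul _)).add
      ((integrable_sq_mul_phiR hσ).const_mul _)
  have h := key.comp_sub_right x
  have : (fun y : ℝ => (A + B * (y - x + x) ^ 2) * phiR σ (y - x))
      = fun y : ℝ => (A + B * y ^ 2) * phiR σ (y - x) := by
    funext y; rw [sub_add_cancel]
  simpa [this] using h

lemma integrable_bound_mul_phiR {σ x A B : ℝ} (hσ : 0 < σ) {h : ℝ → ℝ}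
    (hm : AEStronglyMeasurable h volume) (hb : ∀ y, |h y| ≤ A + B * y ^ 2) :
    Integrable (fun y : ℝ => h y * phiR σ (y - x)) := by
  refine Integrable.mono' (integrable_poly_mul_phiR hσ x A B)
    (hm.mul ((continuous_phiR σ).comp (continuous_id.sub continuous_const)).aestronglyMeasurable)
    (Filter.Eventually.of_forall fun y => ?_)
  have hp : 0 < phiR σ (y - x) := phiR_pos hσ _
  rw [Real.norm_eq_abs, abs_mul, abs_of_pos hp]
  exact mul_le_mul_of_nonneg_right (hb y) hp.le

end Integrability

section Conv

lemma sqrt_mul_sqrt_two_pi {a b : ℝ} (ha : 0 < a) (hb : 0 < b) :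
    Real.sqrt (2 * π * a ^ 2) * Real.sqrt (2 * π * b ^ 2) = 2 * π * (a * b) := by
  rw [← Real.sqrt_mul (by positivity)]
  rw [show 2 * π * a ^ 2 * (2 * π * b ^ 2) = (2 * π * (a * b)) ^ 2 by ring]
  exact Real.sqrt_sq (by positivity)

lemma phiR_mul_phiR {a b : ℝ} (ha : 0 < a) (hb : 0 < b) (x z y : ℝ) :
    phiR b (z - y) * phiR a (y - x) =
      phiR (Real.sqrt (a ^ 2 + b ^ 2)) (z - x) *
        phiR (a * b / Real.sqrt (a ^ 2 + b ^ 2)) (y - (x + a ^ 2 * (z - x) / (a ^ 2 + b ^ 2))) := by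
  set c : ℝ := Real.sqrt (a ^ 2 + b ^ 2) with hc
  have hc0 : 0 < c := Real.sqrt_pos.2 (by positivity)
  have hc2 : c ^ 2 = a ^ 2 + b ^ 2 := Real.sq_sqrt (by positivity)
  set s : ℝ := a * b / c with hs
  have hs0 : 0 < s := by positivity
  unfold phiR
  rw [mul_mul_mul_comm, mul_mul_mul_comm ((Real.sqrt (2 * π * c ^ 2))⁻¹),
    ← Real.exp_add, ← Real.exp_add]
  congr 1
  · rw [← mul_inv, ← mul_inv]
    congr 1
    rw [mul_comm (Real.sqrt (2 * π * b ^ 2)), sqrt_mul_sqrt_two_pi ha hb,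
      sqrt_mul_sqrt_two_pi hc0 hs0]
    rw [hs]
    field_simp
  · have hss : s ^ 2 = a ^ 2 * b ^ 2 / (a ^ 2 + b ^ 2) := by
      rw [hs, div_pow, hc2]; ring
    rw [hss, hc2]
    have hab : (0:ℝ) < a ^ 2 + b ^ 2 := by positivity
    congr 1
    field_simp
    ring

lemma integral_phiR_conv {a b : ℝ} (ha : 0 < a) (hb : 0 < b) (x z : ℝ) :
    ∫ y : ℝ, phiR b (z - y) * phiR a (y - x) =
      phiR (Real.sqrt (a ^ 2 + b ^ 2)) (z - x) := by
  have hc0 : 0 < Real.sqrt (a ^ 2 + b ^ 2) := Real.sqrt_pos.2 (by positivity)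
  have hs0 : 0 < a * b / Real.sqrt (a ^ 2 + b ^ 2) := by positivity
  simp_rw [phiR_mul_phiR ha hb x z]
  rw [integral_const_mul, integral_phiR_sub hs0, mul_one]

end Conv

section OutDens
variable {σ : ℝ} {μ : Measure ℝ}

lemma stronglyMeasurable_outDens (σ : ℝ) (μ : Measure ℝ) [SFinite μ] :
    StronglyMeasurable (outDens σ μ) := by
  have : Continuous fun p : ℝ × ℝ => phiR σ (p.1 - p.2) :=
    (continuous_phiR σ).comp (continuous_fst.sub continuous_snd)
  exact this.stronglyMeasurable.integral_prod_right'

lemma integrable_phiR_sub_measure (hσ : 0 < σ) [IsProbabilityMeasure μ] (y : ℝ) :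
    Integrable (fun x => phiR σ (y - x)) μ := by
  refine Integrable.mono' (integrable_const ((Real.sqrt (2 * π * σ ^ 2))⁻¹))
    (((continuous_phiR σ).comp (continuous_const.sub continuous_id)).aestronglyMeasurable)
    (Filter.Eventually.of_forall fun x => ?_)
  rw [Real.norm_eq_abs, abs_of_pos (phiR_pos hσ _)]
  exact phiR_le hσ _

lemma outDens_le (hσ : 0 < σ) [IsProbabilityMeasure μ] (y : ℝ) :
    outDens σ μ y ≤ (Real.sqrt (2 * π * σ ^ 2))⁻¹ := by
  have := integral_mono_ae (μ := μ) (integrable_phiR_sub_measure hσ y)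
    (integrable_const ((Real.sqrt (2 * π * σ ^ 2))⁻¹))
    (Filter.Eventually.of_forall fun x => phiR_le hσ (y - x))
  simpa [outDens] using this

lemma outDens_ge (hσ : 0 < σ) [IsProbabilityMeasure μ] {R : ℝ}
    (hR : ∀ᵐ x ∂μ, |x| ≤ R) (y : ℝ) :
    phiR σ (|y| + R) ≤ outDens σ μ y := by
  have h : ∀ᵐ x ∂μ, phiR σ (|y| + R) ≤ phiR σ (y - x) := by
    filter_upwards [hR] with x hx
    refine phiR_anti hσ ?_
    have h1 : |y - x| ≤ |y| + R := (abs_sub y x).trans (by linarith)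
    calc (y - x) ^ 2 = |y - x| ^ 2 := (sq_abs _).symm
      _ ≤ (|y| + R) ^ 2 := by gcongr <;> first | exact abs_nonneg _ | assumption
  have := integral_mono_ae (μ := μ) (integrable_const (phiR σ (|y| + R)))
    (integrable_phiR_sub_measure hσ y) h
  simpa [outDens] using this

lemma outDens_pos (hσ : 0 < σ) [IsProbabilityMeasure μ] {R : ℝ}
    (hR : ∀ᵐ x ∂μ, |x| ≤ R) (y : ℝ) : 0 < outDens σ μ y :=
  lt_of_lt_of_le (phiR_pos hσ _) (outDens_ge hσ hR y)

lemma abs_log_outDens_le (hσ : 0 < σ) [IsProbabilityMeasure μ] {R : ℝ} (hR0 : 0 ≤ R)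
    (hR : ∀ᵐ x ∂μ, |x| ≤ R) (y : ℝ) :
    |Real.log (outDens σ μ y)| ≤
      (|Real.log (Real.sqrt (2 * π * σ ^ 2))| + R ^ 2 / σ ^ 2) + (1 / σ ^ 2) * y ^ 2 := by
  set L := Real.log (Real.sqrt (2 * π * σ ^ 2)) with hL
  have hpos := outDens_pos hσ hR y
  have hup : Real.log (outDens σ μ y) ≤ -L := by
    calc Real.log (outDens σ μ y) ≤ Real.log ((Real.sqrt (2 * π * σ ^ 2))⁻¹) :=
          Real.log_le_log hpos (outDens_le hσ y)
      _ = -L := Real.log_inv _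
  have hlow : -L - (|y| + R) ^ 2 / (2 * σ ^ 2) ≤ Real.log (outDens σ μ y) := by
    have := Real.log_le_log (phiR_pos hσ (|y| + R)) (outDens_ge hσ hR y)
    rw [log_phiR hσ] at this
    calc -L - (|y| + R) ^ 2 / (2 * σ ^ 2) = -L + -(|y| + R) ^ 2 / (2 * σ ^ 2) := by ring
      _ ≤ _ := this
  have hsq : (|y| + R) ^ 2 ≤ 2 * y ^ 2 + 2 * R ^ 2 := by
    have h1 : (|y| - R) ^ 2 ≥ 0 := sq_nonneg _
    have h2 : |y| ^ 2 = y ^ 2 := sq_abs y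
    nlinarith [abs_nonneg y]
  rw [abs_le]
  constructor
  · have hL1 : L ≤ |L| := le_abs_self L
    have h3 : (|y| + R) ^ 2 / (2 * σ ^ 2) ≤ R ^ 2 / σ ^ 2 + (1 / σ ^ 2) * y ^ 2 := by
      calc (|y| + R) ^ 2 / (2 * σ ^ 2) ≤ (2 * y ^ 2 + 2 * R ^ 2) / (2 * σ ^ 2) := by gcongr
        _ = R ^ 2 / σ ^ 2 + (1 / σ ^ 2) * y ^ 2 := by field_simp; ring
    nlinarith [hlow]
  · calc Real.log (outDens σ μ y) ≤ -L := hup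
      _ ≤ |L| := neg_le_abs L
      _ ≤ _ := by
          have h4 : (0:ℝ) ≤ R ^ 2 / σ ^ 2 + 1 / σ ^ 2 * y ^ 2 := by positivity
          linarith

end OutDens

section MeasureStuff
variable {σ : ℝ} {μ : Measure ℝ}

lemma measurable_ofReal_phiR (σ x : ℝ) :
    Measurable fun y : ℝ => ENNReal.ofReal (phiR σ (y - x)) :=
  (((continuous_phiR σ).comp (continuous_id.sub continuous_const)).measurable).ennreal_ofReal

lemma isProbabilityMeasure_gauss1 (hσ : 0 < σ) (x : ℝ) :
    IsProbabilityMeasure (gauss1 σ x) := by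
  constructor
  rw [gauss1, withDensity_apply _ MeasurableSet.univ, Measure.restrict_univ,
    lintegral_phiR_sub hσ x]

end MeasureStuff


section MoreAux
variable {σ : ℝ} {μ : Measure ℝ}

lemma convGauss1_eq (hσ : 0 < σ) (μ : Measure ℝ) [IsProbabilityMeasure μ] :
    convGauss1 μ σ = volume.withDensity fun y => ENNReal.ofReal (outDens σ μ y) := by
  haveI := isProbabilityMeasure_gauss1 hσ 0
  ext s hs
  rw [convGauss1, Measure.map_apply measurable_add hs,
    Measure.prod_apply (hs.preimage measurable_add)]
  have hstep : ∀ x : ℝ, gauss1 σ 0 (Prod.mk x ⁻¹' ((fun p : ℝ × ℝ => p.1 + p.2) ⁻¹' s))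
      = ∫⁻ z, s.indicator 1 z * ENNReal.ofReal (phiR σ (z - x)) := by
    intro x
    have hset : Prod.mk x ⁻¹' ((fun p : ℝ × ℝ => p.1 + p.2) ⁻¹' s)
        = (fun y => x + y) ⁻¹' s := by ext y; simp
    have htm : MeasurableSet ((fun y : ℝ => x + y) ⁻¹' s) :=
      hs.preimage (measurable_const_add x)
    rw [hset, gauss1, withDensity_apply _ htm, ← lintegral_indicator htm]
    have hfun : (((fun y : ℝ => x + y) ⁻¹' s).indicator
          fun y => ENNReal.ofReal (phiR σ (y - 0)))
        = fun y => (fun z => s.indicator 1 z * ENNReal.ofReal (phiR σ (z - x))) (x + y) := by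
      funext y
      by_cases h : x + y ∈ s <;>
        simp [Set.indicator_apply, h, sub_zero, add_sub_cancel_left]
    rw [hfun, lintegral_add_left_eq_self]
  simp_rw [hstep]
  rw [lintegral_lintegral_swap]
  · have hinner : ∀ z, (∫⁻ x, s.indicator 1 z * ENNReal.ofReal (phiR σ (z - x)) ∂μ)
        = s.indicator (fun z => ENNReal.ofReal (outDens σ μ z)) z := by
      intro z
      have hm : Measurable fun x : ℝ => ENNReal.ofReal (phiR σ (z - x)) :=
        (((continuous_phiR σ).comp (continuous_const.sub continuous_id)).measurable).ennreal_ofReal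
      rw [lintegral_const_mul _ hm]
      rw [← ofReal_integral_eq_lintegral_ofReal (integrable_phiR_sub_measure hσ z)
        (Filter.Eventually.of_forall fun x => (phiR_pos hσ _).le)]
      by_cases h : z ∈ s <;> simp [Set.indicator_apply, h, outDens]
    simp_rw [hinner]
    rw [lintegral_indicator hs, withDensity_apply _ hs]
  · apply Measurable.aemeasurable
    apply Measurable.mul
    · exact (measurable_const.indicator hs).comp measurable_snd
    · exact (((continuous_phiR σ).comp
        (continuous_snd.sub continuous_fst)).measurable).ennreal_ofReal

lemma integral_gauss1 (hσ : 0 < σ) (x : ℝ) (g : ℝ → ℝ) :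
    ∫ y, g y ∂(gauss1 σ x) = ∫ y, g y * phiR σ (y - x) := by
  have hmeas : Measurable fun y : ℝ => (phiR σ (y - x)).toNNReal :=
    measurable_real_toNNReal.comp
      ((continuous_phiR σ).comp (continuous_id.sub continuous_const)).measurable
  have hg : gauss1 σ x = volume.withDensity fun y => ((phiR σ (y - x)).toNNReal : ℝ≥0∞) := rfl
  rw [hg, integral_withDensity_eq_integral_smul hmeas]
  congr 1
  funext y
  rw [NNReal.smul_def, Real.coe_toNNReal _ (phiR_pos hσ _).le, smul_eq_mul, mul_comm]

lemma rnDeriv_gauss1_convGauss1 (hσ : 0 < σ) (μ : Measure ℝ) [IsProbabilityMeasure μ]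
    {R : ℝ} (hR : ∀ᵐ x ∂μ, |x| ≤ R) (x : ℝ) :
    (gauss1 σ x).rnDeriv (convGauss1 μ σ) =ᵐ[volume]
      fun y => ENNReal.ofReal (phiR σ (y - x)) / ENNReal.ofReal (outDens σ μ y) := by
  haveI := isProbabilityMeasure_gauss1 hσ x
  have hfm : Measurable fun y : ℝ => ENNReal.ofReal (outDens σ μ y) :=
    (stronglyMeasurable_outDens σ μ).measurable.ennreal_ofReal
  have hne0 : ∀ᵐ y ∂(volume : Measure ℝ), ENNReal.ofReal (outDens σ μ y) ≠ 0 :=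
    Filter.Eventually.of_forall fun y =>
      (ENNReal.ofReal_pos.2 (outDens_pos hσ hR y)).ne'
  have hnetop : ∀ᵐ y ∂(volume : Measure ℝ), ENNReal.ofReal (outDens σ μ y) ≠ ⊤ :=
    Filter.Eventually.of_forall fun y => ENNReal.ofReal_ne_top
  have h1 := Measure.rnDeriv_withDensity_right (gauss1 σ x) volume hfm.aemeasurable hne0 hnetop
  have h2 : (gauss1 σ x).rnDeriv volume =ᵐ[volume]
      fun y => ENNReal.ofReal (phiR σ (y - x)) :=
    Measure.rnDeriv_withDensity volume (measurable_ofReal_phiR σ x)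
  rw [convGauss1_eq hσ μ]
  filter_upwards [h1, h2] with y hy1 hy2
  rw [hy1, hy2, div_eq_mul_inv, mul_comm]

lemma KL_gauss1_convGauss1 (hσ : 0 < σ) (μ : Measure ℝ) [IsProbabilityMeasure μ]
    {R : ℝ} (hR : ∀ᵐ x ∂μ, |x| ≤ R) (x : ℝ) :
    KL (gauss1 σ x) (convGauss1 μ σ) =
      ∫ y, (Real.log (phiR σ (y - x)) - Real.log (outDens σ μ y)) * phiR σ (y - x) := by
  have hac : gauss1 σ x ≪ volume := withDensity_absolutelyContinuous _ _
  have hae : (fun y => Real.log ((gauss1 σ x).rnDeriv (convGauss1 μ σ) y).toReal)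
      =ᵐ[gauss1 σ x]
      fun y => Real.log (phiR σ (y - x)) - Real.log (outDens σ μ y) := by
    refine hac.ae_eq ?_
    filter_upwards [rnDeriv_gauss1_convGauss1 hσ μ hR x] with y hy
    rw [hy, ENNReal.toReal_div, ENNReal.toReal_ofReal (phiR_pos hσ _).le,
      ENNReal.toReal_ofReal (outDens_pos hσ hR y).le,
      Real.log_div (phiR_pos hσ _).ne' (outDens_pos hσ hR y).ne']
  rw [KL, integral_congr_ae hae, integral_gauss1 hσ x]

lemma integrable_log_phiR_mul (hσ : 0 < σ) (x : ℝ) :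
    Integrable (fun y : ℝ => Real.log (phiR σ (y - x)) * phiR σ (y - x)) := by
  set L := Real.log (Real.sqrt (2 * π * σ ^ 2)) with hL
  refine integrable_bound_mul_phiR (A := |L| + x ^ 2 / σ ^ 2) (B := 1 / σ ^ 2) hσ ?_ ?_
  · have : (fun y : ℝ => Real.log (phiR σ (y - x)))
        = fun y => -L + -(y - x) ^ 2 / (2 * σ ^ 2) := by
      funext y; rw [log_phiR hσ]
    rw [this]
    exact (Continuous.aestronglyMeasurable (by fun_prop))
  · intro y
    refine (abs_log_phiR_le hσ (y - x)).trans ?_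
    have h1 : (y - x) ^ 2 ≤ 2 * y ^ 2 + 2 * x ^ 2 := by nlinarith [sq_nonneg (y + x)]
    have h2 : (y - x) ^ 2 / (2 * σ ^ 2) ≤ x ^ 2 / σ ^ 2 + 1 / σ ^ 2 * y ^ 2 := by
      calc (y - x) ^ 2 / (2 * σ ^ 2) ≤ (2 * y ^ 2 + 2 * x ^ 2) / (2 * σ ^ 2) := by gcongr
        _ = x ^ 2 / σ ^ 2 + 1 / σ ^ 2 * y ^ 2 := by field_simp; ring
    linarith

lemma ent_shift (σ x : ℝ) :
    ∫ y : ℝ, Real.log (phiR σ (y - x)) * phiR σ (y - x)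
      = ∫ u : ℝ, Real.log (phiR σ u) * phiR σ u :=
  integral_sub_right_eq_self (fun u : ℝ => Real.log (phiR σ u) * phiR σ u) x

lemma phiR_scale {σ1 σ2 : ℝ} (hσ1 : 0 < σ1) (hσ2 : 0 < σ2) (v : ℝ) :
    phiR σ2 (σ2 / σ1 * v) = (σ2 / σ1)⁻¹ * phiR σ1 v := by
  unfold phiR
  have hs2 : Real.sqrt (2 * π * σ2 ^ 2) = σ2 / σ1 * Real.sqrt (2 * π * σ1 ^ 2) := by
    rw [show 2 * π * σ2 ^ 2 = (σ2 / σ1) ^ 2 * (2 * π * σ1 ^ 2) by field_simp,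
      Real.sqrt_mul (by positivity), Real.sqrt_sq (by positivity)]
  rw [hs2, mul_inv]
  have hexp : -(σ2 / σ1 * v) ^ 2 / (2 * σ2 ^ 2) = -v ^ 2 / (2 * σ1 ^ 2) := by
    field_simp
  rw [hexp]
  ring

lemma ent_scale {σ1 σ2 : ℝ} (hσ1 : 0 < σ1) (hσ12 : σ1 < σ2) :
    ∫ u : ℝ, Real.log (phiR σ2 u) * phiR σ2 u
      = (∫ u : ℝ, Real.log (phiR σ1 u) * phiR σ1 u) - Real.log (σ2 / σ1) := by
  have hσ2 : 0 < σ2 := hσ1.trans hσ12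
  set c : ℝ := σ2 / σ1 with hc
  have hc0 : 0 < c := by positivity
  have h1 := MeasureTheory.Measure.integral_comp_mul_left
    (fun u : ℝ => Real.log (phiR σ2 u) * phiR σ2 u) c
  have h2 : ∀ v : ℝ, Real.log (phiR σ2 (c * v)) * phiR σ2 (c * v)
      = c⁻¹ * ((-Real.log c) * phiR σ1 v + Real.log (phiR σ1 v) * phiR σ1 v) := by
    intro v
    rw [phiR_scale hσ1 hσ2 v, Real.log_mul (by positivity) (phiR_pos hσ1 v).ne',
      Real.log_inv]
    ring
  simp_rw [h2] at h1
  have hI0 : Integrable (fun v : ℝ => phiR σ1 v) := by simpa using integrable_phiR_sub hσ1 0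
  have hI2 : Integrable (fun v : ℝ => Real.log (phiR σ1 v) * phiR σ1 v) := by
    simpa using integrable_log_phiR_mul hσ1 0
  have hint1 : ∫ v : ℝ, phiR σ1 v = 1 := by simpa using integral_phiR_sub hσ1 0
  rw [integral_const_mul, integral_add ((hI0.const_mul _)) hI2, integral_const_mul, hint1,
    mul_one, abs_of_pos (inv_pos.2 hc0), smul_eq_mul] at h1
  have h3 := mul_left_cancel₀ (inv_ne_zero hc0.ne') h1
  linarith

section Fubini

variable {σ1 σ2 : ℝ} {μ : Measure ℝ}

lemma eta_pos {σ1 σ2 : ℝ} (hσ1 : 0 < σ1) (hσ12 : σ1 < σ2) :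
    0 < Real.sqrt (σ2 ^ 2 - σ1 ^ 2) :=
  Real.sqrt_pos.2 (by nlinarith)

lemma sigma2_eq {σ1 σ2 : ℝ} (hσ1 : 0 < σ1) (hσ12 : σ1 < σ2) :
    Real.sqrt (σ1 ^ 2 + Real.sqrt (σ2 ^ 2 - σ1 ^ 2) ^ 2) = σ2 := by
  rw [Real.sq_sqrt (by nlinarith : (0:ℝ) ≤ σ2 ^ 2 - σ1 ^ 2)]
  rw [show σ1 ^ 2 + (σ2 ^ 2 - σ1 ^ 2) = σ2 ^ 2 by ring]
  exact Real.sqrt_sq (hσ1.trans hσ12).le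

lemma measurable_log_outDens (σ : ℝ) (μ : Measure ℝ) [SFinite μ] :
    Measurable fun y => Real.log (outDens σ μ y) :=
  Real.measurable_log.comp (stronglyMeasurable_outDens σ μ).measurable

lemma fubini_key (hσ1 : 0 < σ1) (hσ12 : σ1 < σ2) (μ : Measure ℝ) [IsProbabilityMeasure μ]
    {R : ℝ} (hR0 : 0 ≤ R) (hR : ∀ᵐ x ∂μ, |x| ≤ R) (x : ℝ) :
    (∫ y : ℝ, (∫ t : ℝ, Real.log (outDens σ2 μ (y + t)) * phiR (Real.sqrt (σ2 ^ 2 - σ1 ^ 2)) t)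
        * phiR σ1 (y - x)
      = ∫ z : ℝ, Real.log (outDens σ2 μ z) * phiR σ2 (z - x)) ∧
    Integrable (fun y : ℝ =>
      (∫ t : ℝ, Real.log (outDens σ2 μ (y + t)) * phiR (Real.sqrt (σ2 ^ 2 - σ1 ^ 2)) t)
        * phiR σ1 (y - x)) := by
  have hσ2 : 0 < σ2 := hσ1.trans hσ12
  set η : ℝ := Real.sqrt (σ2 ^ 2 - σ1 ^ 2) with hη
  have hη0 : 0 < η := eta_pos hσ1 hσ12
  set h : ℝ → ℝ := fun z => Real.log (outDens σ2 μ z) with hh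
  have hhm : Measurable h := measurable_log_outDens σ2 μ
  obtain ⟨A, B, hAB⟩ : ∃ A B : ℝ, ∀ z, |h z| ≤ A + B * z ^ 2 :=
    ⟨_, _, abs_log_outDens_le hσ2 hR0 hR⟩
  set G : ℝ × ℝ → ℝ := fun p => (h p.1 * phiR η (p.1 - p.2)) * phiR σ1 (p.2 - x) with hG
  have hGm : AEStronglyMeasurable G ((volume : Measure ℝ).prod volume) := by
    apply Measurable.aestronglyMeasurable
    apply Measurable.mul
    · exact (hhm.comp measurable_fst).mul
        ((continuous_phiR η).measurable.comp (measurable_fst.sub measurable_snd))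
    · exact (continuous_phiR σ1).measurable.comp (measurable_snd.sub measurable_const)
  have hconv : ∀ z : ℝ, ∫ y : ℝ, phiR η (z - y) * phiR σ1 (y - x) = phiR σ2 (z - x) := by
    intro z
    rw [integral_phiR_conv hσ1 hη0 x z, sigma2_eq hσ1 hσ12]
  have hint_y : ∀ z : ℝ, Integrable (fun y => phiR η (z - y) * phiR σ1 (y - x)) := by
    intro z
    refine integrable_bound_mul_phiR (A := (Real.sqrt (2 * π * η ^ 2))⁻¹) (B := 0) hσ1
      (((continuous_phiR η).comp (continuous_const.sub continuous_id)).aestronglyMeasurable) ?_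
    intro y
    rw [abs_of_pos (phiR_pos hη0 _), zero_mul, add_zero]
    exact phiR_le hη0 _
  have hGi : Integrable G ((volume : Measure ℝ).prod volume) := by
    rw [integrable_prod_iff hGm]
    constructor
    · refine Filter.Eventually.of_forall fun z => ?_
      have : (fun y => G (z, y)) = fun y => h z * (phiR η (z - y) * phiR σ1 (y - x)) := by
        funext y; simp only [hG]; ring
      rw [this]
      exact (hint_y z).const_mul _
    · have : (fun z => ∫ y, ‖G (z, y)‖) = fun z => |h z| * phiR σ2 (z - x) := by
        funext z
        have h1 : (fun y => ‖G (z, y)‖)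
            = fun y => |h z| * (phiR η (z - y) * phiR σ1 (y - x)) := by
          funext y
          simp only [hG, Real.norm_eq_abs, abs_mul, abs_of_pos (phiR_pos hη0 _),
            abs_of_pos (phiR_pos hσ1 _)]
          ring
        rw [h1, integral_const_mul, hconv z]
      rw [this]
      exact integrable_bound_mul_phiR hσ2 (hhm.abs.aestronglyMeasurable)
        (fun z => by rw [abs_abs]; exact hAB z)
  have step1 : ∀ y : ℝ, (∫ t : ℝ, h (y + t) * phiR η t) = ∫ z : ℝ, h z * phiR η (z - y) := by
    intro y
    have h0 := integral_add_right_eq_self (μ := (volume : Measure ℝ))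
      (fun z : ℝ => h z * phiR η (z - y)) y
    simp only [add_sub_cancel_right] at h0
    rw [← h0]
    congr 1; funext t; rw [add_comm]
  have step2 : ∀ y : ℝ, (∫ z : ℝ, h z * phiR η (z - y)) * phiR σ1 (y - x)
      = ∫ z : ℝ, G (z, y) := by
    intro y
    rw [← integral_mul_const]

  have hIL : Integrable (fun y : ℝ => (∫ t : ℝ, h (y + t) * phiR η t) * phiR σ1 (y - x)) := by
    have heq : (fun y : ℝ => (∫ t : ℝ, h (y + t) * phiR η t) * phiR σ1 (y - x))
        = fun y => ∫ z : ℝ, G (z, y) := by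
      funext y; rw [step1 y, step2 y]
    rw [heq]
    exact hGi.integral_prod_right
  refine ⟨?_, hIL⟩
  calc ∫ y : ℝ, (∫ t : ℝ, h (y + t) * phiR η t) * phiR σ1 (y - x)
      = ∫ y : ℝ, ∫ z : ℝ, G (z, y) := by
        congr 1; funext y; rw [step1 y, step2 y]
    _ = ∫ z : ℝ, ∫ y : ℝ, G (z, y) := (integral_integral_swap (f := fun z y => G (z, y)) (by exact hGi)).symm
    _ = ∫ z : ℝ, h z * phiR σ2 (z - x) := by
        congr 1; funext z
        have : (fun y => G (z, y)) = fun y => h z * (phiR η (z - y) * phiR σ1 (y - x)) := by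
          funext y; simp only [hG]; ring
        rw [this, integral_const_mul, hconv z]

end Fubini


end MoreAux

end AuxiliaryProofs

/-- For every compactly supported probability measure `μ` on `ℝ` and
every `x ∈ ℝ`, the difference of relative entropies equals
`∫ g(y) φ_{σ1}(y−x) dy + log(σ2/σ1)`. -/
theorem scalar_secrecy_density_representation
    (σ1 σ2 : ℝ) (hσ1 : 0 < σ1) (hσ12 : σ1 < σ2)
    (μ : Measure ℝ) (hprob : IsProbabilityMeasure μ)
    (hcomp : ∃ K : Set ℝ, IsCompact K ∧ μ Kᶜ = 0) (x : ℝ) :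
    KL (gauss1 σ1 x) (convGauss1 μ σ1) - KL (gauss1 σ2 x) (convGauss1 μ σ2) =
      (∫ y : ℝ, gFun σ1 σ2 μ y * phiR σ1 (y - x)) + Real.log (σ2 / σ1) := by
  have hσ2 : 0 < σ2 := hσ1.trans hσ12
  obtain ⟨K, hK, hKc⟩ := hcomp
  obtain ⟨r, hr⟩ := hK.isBounded.subset_closedBall 0
  set R := max r 0 with hRdef
  have hR0 : 0 ≤ R := le_max_right _ _
  have hR : ∀ᵐ x ∂μ, |x| ≤ R := by
    have hae : ∀ᵐ x ∂μ, x ∈ K := by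
      rw [ae_iff]
      exact hKc
    filter_upwards [hae] with a ha
    have h1 := hr ha
    rw [Metric.mem_closedBall, Real.dist_eq, sub_zero] at h1
    exact h1.trans (le_max_left _ _)
  obtain ⟨hfub, hIL⟩ := fubini_key hσ1 hσ12 μ hR0 hR x
  have hLog1 : Integrable (fun y => Real.log (outDens σ1 μ y) * phiR σ1 (y - x)) :=
    integrable_bound_mul_phiR hσ1 (measurable_log_outDens σ1 μ).aestronglyMeasurable
      (abs_log_outDens_le hσ1 hR0 hR)
  have hLog2 : Integrable (fun z => Real.log (outDens σ2 μ z) * phiR σ2 (z - x)) :=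
    integrable_bound_mul_phiR hσ2 (measurable_log_outDens σ2 μ).aestronglyMeasurable
      (abs_log_outDens_le hσ2 hR0 hR)
  have hsplit1 : KL (gauss1 σ1 x) (convGauss1 μ σ1)
      = (∫ y : ℝ, Real.log (phiR σ1 (y - x)) * phiR σ1 (y - x))
        - ∫ y : ℝ, Real.log (outDens σ1 μ y) * phiR σ1 (y - x) := by
    rw [KL_gauss1_convGauss1 hσ1 μ hR x]
    simp_rw [sub_mul]
    rw [integral_sub (integrable_log_phiR_mul hσ1 x) hLog1]
  have hsplit2 : KL (gauss1 σ2 x) (convGauss1 μ σ2)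
      = (∫ y : ℝ, Real.log (phiR σ2 (y - x)) * phiR σ2 (y - x))
        - ∫ y : ℝ, Real.log (outDens σ2 μ y) * phiR σ2 (y - x) := by
    rw [KL_gauss1_convGauss1 hσ2 μ hR x]
    simp_rw [sub_mul]
    rw [integral_sub (integrable_log_phiR_mul hσ2 x) hLog2]
  have hg : ∫ y : ℝ, gFun σ1 σ2 μ y * phiR σ1 (y - x)
      = (∫ z : ℝ, Real.log (outDens σ2 μ z) * phiR σ2 (z - x))
        - ∫ y : ℝ, Real.log (outDens σ1 μ y) * phiR σ1 (y - x) := by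
    unfold gFun
    simp_rw [sub_mul]
    rw [integral_sub hIL hLog1, hfub]
  rw [hsplit1, hsplit2, hg, ent_shift σ1 x, ent_shift σ2 x, ent_scale hσ1 hσ12]
  ring
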